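/- If (a,b) has joint density k(a,b) = 2/(π²·a·b) on {a > 0, |1−a| < b < 1+a}, then x = max{a,b} has density (4/π²)·(ln(x) − ln|1−x|)/x for x > 1/2 (and 0 for 0 < x ≤ 1/2). -/

import Mathlib

open Real MeasureTheory

/-- Joint side-density of a uniform triangle with base `c = 1`. -/
noncomputable def k (a b : ℝ) : ℝ :=
  if 0 < a ∧ |1 - a| < b ∧ b < 1 + a then 2 / (π ^ 2 * a * b) else 0

lemma k_symm_on (x : ℝ) (hx : 1 / 2 < x) {a : ℝ} (ha : a ∈ Set.Ioo (0:ℝ) x) :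
    k a x = k x a := by
  obtain ⟨h0, h1⟩ := ha
  have hx0 : (0:ℝ) < x := lt_trans (by norm_num) hx
  unfold k
  have hcond : (0 < a ∧ |1 - a| < x ∧ x < 1 + a) ↔ (0 < x ∧ |1 - x| < a ∧ a < 1 + x) := by
    rw [abs_lt, abs_lt]
    constructor
    · rintro ⟨_, ⟨h2a, h2b⟩, h3⟩
      exact ⟨hx0, ⟨by linarith, by linarith⟩, by linarith⟩
    · rintro ⟨_, ⟨h2a, h2b⟩, _⟩
      exact ⟨h0, ⟨by linarith, by linarith⟩, by linarith⟩
  by_cases h : 0 < a ∧ |1 - a| < x ∧ x < 1 + a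
  · rw [if_pos h, if_pos (hcond.mp h)]
    ring
  · rw [if_neg h, if_neg (fun h' => h (hcond.mpr h'))]

lemma not_integrable_inv_Ioo : ¬ IntegrableOn (fun b : ℝ => b⁻¹) (Set.Ioo (0:ℝ) 1) := by
  intro h
  have := (integrableOn_congr_fun (fun b hb => (Real.rpow_neg_one b).symm)
    measurableSet_Ioo).mp h
  rw [intervalIntegral.integrableOn_Ioo_rpow_iff zero_lt_one] at this
  linarith

lemma half_integral (x : ℝ) (hx : 1 / 2 < x) :
    (∫ b in Set.Ioo (0:ℝ) x, k x b) =
      (2 / π ^ 2) * (Real.log x - Real.log |1 - x|) / x := by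
  have hx0 : (0:ℝ) < x := lt_trans (by norm_num) hx
  have ht : |1 - x| < x := by
    rw [abs_lt]; constructor <;> linarith
  have ht0 : 0 ≤ |1 - x| := abs_nonneg _
  -- rewrite integrand on Ioo 0 x
  have step1 : (∫ b in Set.Ioo (0:ℝ) x, k x b) =
      ∫ b in Set.Ioo (0:ℝ) x,
        Set.indicator (Set.Ioo (|1 - x|) x) (fun b => 2 / (π ^ 2 * x * b)) b := by
    refine setIntegral_congr_fun measurableSet_Ioo (fun b hb => ?_)
    obtain ⟨hb0, hbx⟩ := hb
    unfold k
    by_cases hcase : |1 - x| < b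
    · rw [if_pos ⟨hx0, hcase, by linarith⟩,
        Set.indicator_of_mem (Set.mem_Ioo.mpr ⟨hcase, hbx⟩)]
    · have hnm : b ∉ Set.Ioo (|1 - x|) x := fun hmem => hcase hmem.1
      rw [if_neg (by tauto), Set.indicator_of_notMem hnm]
  rw [step1, setIntegral_indicator measurableSet_Ioo]
  have hinter : Set.Ioo (0:ℝ) x ∩ Set.Ioo (|1 - x|) x = Set.Ioo (|1 - x|) x := by
    apply Set.inter_eq_self_of_subset_right
    intro b hb
    exact ⟨lt_of_le_of_lt ht0 hb.1, hb.2⟩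
  rw [hinter]
  by_cases hx1 : x = 1
  · -- non-integrable case; both sides are 0
    subst hx1
    simp only [sub_self, abs_zero, Real.log_zero, sub_zero]
    have hni : ¬ Integrable (fun b => 2 / (π ^ 2 * 1 * b))
        (volume.restrict (Set.Ioo (0:ℝ) 1)) := by
      intro h
      apply not_integrable_inv_Ioo
      have := h.const_mul (π ^ 2 / 2)
      refine (integrable_congr ?_).mp this
      filter_upwards with b
      have hπ : π ^ 2 ≠ 0 := by positivity
      field_simp
    rw [integral_undef hni]
    simp
  · have htpos : 0 < |1 - x| := abs_pos.mpr (by intro h; apply hx1; linarith)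
    have heq : (∫ b in Set.Ioo (|1 - x|) x, 2 / (π ^ 2 * x * b)) =
        ∫ b in (|1 - x|)..x, (2 / (π ^ 2 * x)) * b⁻¹ := by
      rw [intervalIntegral.integral_of_le ht.le,
        ← MeasureTheory.integral_Ioc_eq_integral_Ioo]
      refine setIntegral_congr_fun measurableSet_Ioc (fun b _ => ?_)
      field_simp
    rw [heq, intervalIntegral.integral_const_mul, integral_inv_of_pos htpos hx0,
      Real.log_div (ne_of_gt hx0) (ne_of_gt htpos)]
    field_simp

theorem uniform_triangle_max_density (x : ℝ) :
    (1 / 2 < x →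
      (∫ b in Set.Ioo (0:ℝ) x, k x b) + (∫ a in Set.Ioo (0:ℝ) x, k a x) =
        (4 / π ^ 2) * (Real.log x - Real.log |1 - x|) / x) ∧
    (0 < x → x ≤ 1 / 2 →
      (∫ b in Set.Ioo (0:ℝ) x, k x b) + (∫ a in Set.Ioo (0:ℝ) x, k a x) = 0) := by
  constructor
  · intro hx
    have h2 : (∫ a in Set.Ioo (0:ℝ) x, k a x) = ∫ b in Set.Ioo (0:ℝ) x, k x b :=
      setIntegral_congr_fun measurableSet_Ioo (fun a ha => k_symm_on x hx ha)
    rw [h2, half_integral x hx]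
    ring
  · intro hx0 hx
    have h1 : (∫ b in Set.Ioo (0:ℝ) x, k x b) = 0 := by
      rw [setIntegral_congr_fun measurableSet_Ioo
        (g := fun _ => (0:ℝ)) (fun b hb => ?_), integral_zero]
      unfold k
      rw [if_neg]
      rintro ⟨_, h2, _⟩
      have : |1 - x| = 1 - x := abs_of_nonneg (by linarith)
      obtain ⟨hb0, hbx⟩ := hb
      rw [this] at h2
      linarith
    have h2 : (∫ a in Set.Ioo (0:ℝ) x, k a x) = 0 := by
      rw [setIntegral_congr_fun measurableSet_Ioo
        (g := fun _ => (0:ℝ)) (fun a ha => ?_), integral_zero]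
      unfold k
      rw [if_neg]
      rintro ⟨_, h2, _⟩
      have ha1 : a < 1 := by
        obtain ⟨ha0, hax⟩ := ha
        linarith
      rw [abs_of_nonneg (by linarith)] at h2
      obtain ⟨ha0, hax⟩ := ha
      linarith
    rw [h1, h2, add_zero]
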